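/- Let X and Y be complex Banach spaces, let E ⊆ X and T ⊆ Y be open subsets, and let φ : E × T → ℂ be a function such that (i) there is a constant M with |φ(x,t)| ≤ M for all x ∈ E and t ∈ T, (ii) for each fixed t ∈ T the function x ↦ φ(x,t) is holomorphic (analytic over ℂ) on E, and (iii) for each fixed x ∈ E the function t ↦ φ(x,t) is holomorphic on T. Then the induced map Φ : T → C_b(E, ℂ), defined by Φ(t) = φ(·, t), into the Banach space of bounded continuous complex-valued functions on E equipped with the supremum norm, is holomorphic (Fréchet differentiable over ℂ) on T. -/

import Mathlib

open Metric Finset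

lemma taylor_rem {f : ℂ → ℂ} {r M : ℝ} (hr : 0 < r)
    (hf : DifferentiableOn ℂ f (Metric.closedBall 0 r))
    (hM : ∀ w ∈ Metric.closedBall (0:ℂ) r, ‖f w‖ ≤ M)
    {z : ℂ} (hz : ‖z‖ ≤ r / 2) :
    ‖f z - f 0 - deriv f 0 * z‖ ≤ 2 * M * ‖z‖ ^ 2 / r ^ 2 := by
  have hM0 : 0 ≤ M := (norm_nonneg _).trans (hM 0 (by simp [hr.le]))
  set R : NNReal := ⟨r, hr.le⟩ with hRdef
  have hRr : (R : ℝ) = r := rfl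
  have hfR : DifferentiableOn ℂ f (Metric.closedBall 0 (R : ℝ)) := by rwa [hRr]
  have hps : HasFPowerSeriesOnBall f (cauchyPowerSeries f 0 R) 0 R :=
    hfR.hasFPowerSeriesOnBall (by exact_mod_cast hr)
  set p := cauchyPowerSeries f 0 (R : ℝ) with hp
  -- coefficient bound
  have hcoef : ∀ n, ‖p n‖ ≤ M / r ^ n := by
    intro n
    have h1 := norm_cauchyPowerSeries_le f 0 r n
    have h2 : (∫ θ : ℝ in (0)..2 * Real.pi, ‖f (circleMap 0 r θ)‖) ≤ 2 * Real.pi * M := by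
      have : ∀ θ : ℝ, ‖f (circleMap 0 r θ)‖ ≤ M := fun θ =>
        hM _ (by simp [Metric.mem_closedBall, Complex.dist_eq, circleMap, abs_of_pos hr,
          Complex.norm_exp_ofReal_mul_I, le_of_eq, hr.le, norm_circleMap_zero, abs_of_nonneg hr.le])
      calc (∫ θ : ℝ in (0)..2 * Real.pi, ‖f (circleMap 0 r θ)‖)
          ≤ ∫ _ : ℝ in (0)..2 * Real.pi, M := by
            apply intervalIntegral.integral_mono_on Real.two_pi_pos.le
            · apply Continuous.intervalIntegrable
              exact ((hf.continuousOn.comp_continuous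
                (continuous_circleMap 0 r) (fun θ => by
                  simp [Metric.mem_closedBall, abs_of_nonneg hr.le])).norm)
            · exact intervalIntegrable_const
            · exact fun θ _ => this θ
        _ = 2 * Real.pi * M := by simp [mul_comm]
    calc ‖p n‖ ≤ ((2 * Real.pi)⁻¹ * ∫ θ : ℝ in (0)..2 * Real.pi, ‖f (circleMap 0 r θ)‖) * |r|⁻¹ ^ n := h1
      _ ≤ ((2 * Real.pi)⁻¹ * (2 * Real.pi * M)) * |r|⁻¹ ^ n := by
          gcongr
      _ = M / r ^ n := by
          rw [abs_of_pos hr, inv_pow, ← div_eq_mul_inv]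
          congr 1
          field_simp [Real.pi_pos.ne']
  -- the power series converges at z
  have hzR : z ∈ Metric.eball (0:ℂ) R := by
    rw [EMetric.mem_ball, edist_zero_right]
    exact_mod_cast lt_of_le_of_lt hz (by linarith : r / 2 < r)
  have hsum : HasSum (fun n => p n fun _ => z) (f z) := by
    have := hps.hasSum hzR
    simpa using this
  -- identify the first two terms
  have ha0 : (p 0 fun _ => z) = f 0 := by
    have := hps.coeff_zero (fun _ => z)
    simpa using this
  have ha1 : (p 1 fun _ => z) = deriv f 0 * z := by
    have hd : deriv f 0 = p 1 fun _ => 1 := hps.hasFPowerSeriesAt.deriv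
    have : (p 1 fun _ => z) = (p 1 fun i => z • 1) := by norm_num
    rw [this, ContinuousMultilinearMap.map_smul_univ]
    simp [hd, mul_comm]
  -- split off the first two terms
  have hsplit : f z - f 0 - deriv f 0 * z = ∑' n : ℕ, p (n + 2) fun _ => z := by
    have h2 := Summable.sum_add_tsum_nat_add 2 hsum.summable
    rw [hsum.tsum_eq] at h2
    simp only [Finset.sum_range_succ, Finset.sum_range_zero, zero_add, ha0, ha1] at h2
    rw [← h2]
    ring
  rw [hsplit]
  -- tail estimate
  have hterm : ∀ n : ℕ, ‖p (n + 2) fun _ => z‖ ≤ (M * ‖z‖ ^ 2 / r ^ 2) * (1 / 2) ^ n := by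
    intro n
    calc ‖p (n + 2) fun _ => z‖ ≤ ‖p (n + 2)‖ * ∏ _i : Fin (n + 2), ‖z‖ :=
          (p (n + 2)).le_opNorm _
      _ = ‖p (n + 2)‖ * ‖z‖ ^ (n + 2) := by simp
      _ ≤ (M / r ^ (n + 2)) * ‖z‖ ^ (n + 2) :=
          mul_le_mul_of_nonneg_right (hcoef _) (by positivity)
      _ = (M * ‖z‖ ^ 2 / r ^ 2) * (‖z‖ / r) ^ n := by
          rw [div_pow]
          field_simp
          ring
      _ ≤ (M * ‖z‖ ^ 2 / r ^ 2) * (1 / 2) ^ n :=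
          mul_le_mul_of_nonneg_left (pow_le_pow_left₀ (by positivity)
            (by rw [div_le_iff₀ hr]; linarith) n) (by positivity)
  have hgeo := (hasSum_geometric_of_lt_one (by norm_num : (0:ℝ) ≤ 1/2)
      (by norm_num : (1:ℝ)/2 < 1)).mul_left (M * ‖z‖ ^ 2 / r ^ 2)
  calc ‖∑' n : ℕ, p (n + 2) fun _ => z‖ ≤ (M * ‖z‖ ^ 2 / r ^ 2) * (1 - 1/2)⁻¹ :=
        tsum_of_norm_bounded hgeo hterm
    _ = 2 * M * ‖z‖ ^ 2 / r ^ 2 := by norm_num; ring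

set_option maxHeartbeats 1000000 in
/-- **Earle's lemma (Lemma 1 of the paper).**
Let `X`, `Y` be complex Banach spaces, `E ⊆ X`, `T ⊆ Y` open, and
`φ : E × T → ℂ` bounded, holomorphic in `x` for each fixed `t`, and holomorphic
in `t` for each fixed `x`.  Then the induced map `Φ : T → C_b(E, ℂ)`,
`Φ t = φ (·, t)`, into the Banach space of bounded continuous functions on `E`
with the sup norm, is holomorphic on `T`. -/
theorem earle_lemma
    {X Y : Type*} [NormedAddCommGroup X] [NormedSpace ℂ X] [CompleteSpace X]
    [NormedAddCommGroup Y] [NormedSpace ℂ Y] [CompleteSpace Y]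
    {E : Set X} {T : Set Y} (hE : IsOpen E) (hT : IsOpen T)
    (φ : X → Y → ℂ) (M : ℝ)
    (hbound : ∀ x ∈ E, ∀ t ∈ T, ‖φ x t‖ ≤ M)
    (hholX : ∀ t ∈ T, DifferentiableOn ℂ (fun x => φ x t) E)
    (hholY : ∀ x ∈ E, DifferentiableOn ℂ (fun t => φ x t) T)
    (Φ : Y → BoundedContinuousFunction E ℂ)
    (hΦ : ∀ t ∈ T, ∀ x : E, Φ t x = φ (x : X) t) :
    DifferentiableOn ℂ Φ T := by
  intro t₀ ht₀
  obtain ⟨R, hR0, hRT⟩ : ∃ R > 0, Metric.ball t₀ R ⊆ T := by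
    obtain ⟨ε, hε, h⟩ := Metric.isOpen_iff.mp hT t₀ ht₀
    exact ⟨ε, hε, h⟩
  set M' := max M 0 with hM'def
  have hM'0 : (0:ℝ) ≤ M' := le_max_right _ _
  have hbound' : ∀ x ∈ E, ∀ t ∈ T, ‖φ x t‖ ≤ M' := fun x hx t ht =>
    (hbound x hx t ht).trans (le_max_left _ _)
  set L : X → Y →L[ℂ] ℂ := fun x => fderiv ℂ (fun t => φ x t) t₀ with hLdef
  have hLder : ∀ x ∈ E, HasFDerivAt (fun t => φ x t) (L x) t₀ := fun x hx =>
    ((hholY x hx).differentiableAt (hT.mem_nhds ht₀)).hasFDerivAt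
  -- Key uniform second-order estimate
  have key : ∀ x ∈ E, ∀ h : Y, ‖h‖ ≤ R / 4 →
      ‖φ x (t₀ + h) - φ x t₀ - L x h‖ ≤ 8 * M' * ‖h‖ ^ 2 / R ^ 2 := by
    intro x hx h hh
    rcases eq_or_ne h 0 with rfl | hh0
    · simp [hR0.le]
    have hhn : 0 < ‖h‖ := norm_pos_iff.mpr hh0
    set r := R / (2 * ‖h‖) with hrdef
    have hr0 : 0 < r := by positivity
    have hmem : ∀ z : ℂ, z ∈ Metric.closedBall (0:ℂ) r → t₀ + z • h ∈ Metric.ball t₀ R := by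
      intro z hz
      rw [Metric.mem_closedBall, Complex.dist_eq, sub_zero] at hz
      rw [Metric.mem_ball, dist_eq_norm, add_sub_cancel_left, norm_smul]
      calc ‖z‖ * ‖h‖ ≤ r * ‖h‖ := by gcongr
        _ = R / 2 := by rw [hrdef]; field_simp
        _ < R := by linarith
    set ψ : ℂ → ℂ := fun z => φ x (t₀ + z • h) with hψdef
    have hψdiff : ∀ z ∈ Metric.closedBall (0:ℂ) r, DifferentiableAt ℂ ψ z := by
      intro z hz
      have h1 : DifferentiableAt ℂ (fun t => φ x t) (t₀ + z • h) :=
        (hholY x hx).differentiableAt (hT.mem_nhds (hRT (hmem z hz)))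
      have h2 : DifferentiableAt ℂ (fun w : ℂ => t₀ + w • h) z :=
        (differentiableAt_id.smul_const h).const_add t₀
      exact h1.comp z h2
    have hψM : ∀ w ∈ Metric.closedBall (0:ℂ) r, ‖ψ w‖ ≤ M' := fun w hw =>
      hbound' x hx _ (hRT (hmem w hw))
    have hψd0 : deriv ψ 0 = L x h := by
      have hinner : HasDerivAt (fun w : ℂ => t₀ + w • h) h 0 := by
        simpa using ((hasDerivAt_id (0:ℂ)).smul_const h).const_add t₀
      have : HasDerivAt ψ (L x h) 0 := by
        have hg : HasFDerivAt (fun t => φ x t) (L x) (t₀ + (0:ℂ) • h) := by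
          simpa using hLder x hx
        exact hg.comp_hasDerivAt 0 hinner
      exact this.deriv
    have h1r : ‖(1:ℂ)‖ ≤ r / 2 := by
      rw [norm_one, le_div_iff₀ (by norm_num : (0:ℝ) < 2), one_mul, hrdef,
        le_div_iff₀ (by positivity)]
      linarith
    have := taylor_rem hr0 (fun z hz => (hψdiff z hz).differentiableWithinAt) hψM h1r
    rw [hψd0] at this
    simp only [hψdef] at this
    norm_num at this
    calc ‖φ x (t₀ + h) - φ x t₀ - L x h‖
        = ‖φ x (t₀ + (1:ℂ) • h) - φ x (t₀ + (0:ℂ) • h) - L x h‖ := by norm_num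
      _ ≤ 2 * M' / r ^ 2 := by
          convert this using 3 <;> norm_num
      _ = 8 * M' * ‖h‖ ^ 2 / R ^ 2 := by
          rw [hrdef]
          field_simp
          ring
  -- operator norm bound
  have hLb : ∀ x ∈ E, ∀ v : Y, ‖L x v‖ ≤ 10 * M' / R * ‖v‖ := by
    intro x hx v
    rcases eq_or_ne v 0 with rfl | hv0
    · simp
    have hvn : 0 < ‖v‖ := norm_pos_iff.mpr hv0
    set c : ℂ := ((R / (4 * ‖v‖) : ℝ) : ℂ) with hcdef
    set h : Y := c • v with hhdef
    have hcn : ‖c‖ = R / (4 * ‖v‖) := by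
      rw [hcdef, Complex.norm_real, Real.norm_of_nonneg (by positivity)]
    have hhn : ‖h‖ = R / 4 := by
      rw [hhdef, norm_smul, hcn]
      field_simp
    have hmemT : t₀ + h ∈ T := hRT (by
      rw [Metric.mem_ball, dist_eq_norm, add_sub_cancel_left, hhn]
      linarith)
    have hk := key x hx h (le_of_eq hhn)
    have hLh : L x h = c * L x v := by
      rw [hhdef, map_smul, smul_eq_mul]
    have h1 : ‖L x h‖ ≤ ‖φ x (t₀ + h) - φ x t₀ - L x h‖ + ‖φ x (t₀ + h)‖ + ‖φ x t₀‖ := by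
      have heq : (L x h : ℂ) = -(φ x (t₀ + h) - φ x t₀ - L x h) + φ x (t₀ + h) - φ x t₀ := by
        ring
      calc ‖L x h‖ = ‖-(φ x (t₀ + h) - φ x t₀ - L x h) + φ x (t₀ + h) - φ x t₀‖ := by
            rw [← heq]
        _ ≤ ‖-(φ x (t₀ + h) - φ x t₀ - L x h) + φ x (t₀ + h)‖ + ‖φ x t₀‖ := norm_sub_le _ _
        _ ≤ ‖-(φ x (t₀ + h) - φ x t₀ - L x h)‖ + ‖φ x (t₀ + h)‖ + ‖φ x t₀‖ :=
            add_le_add_left (norm_add_le _ _) _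
        _ = ‖φ x (t₀ + h) - φ x t₀ - L x h‖ + ‖φ x (t₀ + h)‖ + ‖φ x t₀‖ := by
            rw [norm_neg]
    have h2 : ‖L x h‖ ≤ 8 * M' * (R / 4) ^ 2 / R ^ 2 + M' + M' := by
      calc ‖L x h‖ ≤ ‖φ x (t₀ + h) - φ x t₀ - L x h‖ + ‖φ x (t₀ + h)‖ + ‖φ x t₀‖ := h1
        _ ≤ 8 * M' * ‖h‖ ^ 2 / R ^ 2 + M' + M' :=
            add_le_add (add_le_add hk (hbound' x hx _ hmemT)) (hbound' x hx _ ht₀)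
        _ = 8 * M' * (R / 4) ^ 2 / R ^ 2 + M' + M' := by rw [hhn]
    have h3 : 8 * M' * (R / 4) ^ 2 / R ^ 2 + M' + M' = 5 * M' / 2 := by
      field_simp
      ring
    rw [h3, hLh, norm_mul, hcn] at h2
    rw [div_mul_eq_mul_div, div_le_div_iff₀ (by positivity) (by norm_num : (0:ℝ) < 2)] at h2
    rw [div_mul_eq_mul_div, le_div_iff₀ hR0]
    nlinarith [norm_nonneg (L x v)]
  -- continuity of x ↦ L x v on E
  have hLcont : ∀ v : Y, Continuous (fun x : E => L (x : X) v) := by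
    intro v
    set c : ℕ → ℂ := fun n => ((R / ((4 * (‖v‖ + 1)) * (n + 1)) : ℝ) : ℂ) with hcdef
    have hcn : ∀ n, ‖c n‖ = R / ((4 * (‖v‖ + 1)) * (n + 1)) := by
      intro n
      rw [hcdef, Complex.norm_real, Real.norm_of_nonneg (by positivity)]
    have hc0 : ∀ n, c n ≠ 0 := by
      intro n hn
      have := hcn n
      rw [hn] at this
      simp only [norm_zero] at this
      have h2 : (0:ℝ) < R / ((4 * (‖v‖ + 1)) * (n + 1)) := by positivity
      linarith
    have hcv : ∀ n : ℕ, ‖c n • v‖ ≤ R / 4 := by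
      intro n
      rw [norm_smul, hcn]
      rw [div_mul_eq_mul_div, div_le_div_iff₀ (by positivity) (by norm_num : (0:ℝ) < 4)]
      have h2 : (1:ℝ) ≤ (n:ℝ) + 1 := by
        have := Nat.cast_nonneg (α := ℝ) n
        linarith
      have h3 : ‖v‖ ≤ (‖v‖ + 1) * ((n:ℝ) + 1) := by
        calc ‖v‖ ≤ ‖v‖ + 1 := by linarith
          _ ≤ (‖v‖ + 1) * ((n:ℝ) + 1) := le_mul_of_one_le_right (by positivity) h2
      nlinarith [mul_le_mul_of_nonneg_left h3 hR0.le]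
    have hmemT : ∀ n : ℕ, t₀ + c n • v ∈ T := by
      intro n
      apply hRT
      rw [Metric.mem_ball, dist_eq_norm, add_sub_cancel_left]
      calc ‖c n • v‖ ≤ R / 4 := hcv n
        _ < R := by linarith
    set F : ℕ → E → ℂ := fun n x => (φ x (t₀ + c n • v) - φ x t₀) / c n with hFdef
    have hFcont : ∀ n, Continuous (F n) := by
      intro n
      apply Continuous.div_const
      apply Continuous.sub
      · exact continuousOn_iff_continuous_restrict.mp (hholX _ (hmemT n)).continuousOn
      · exact continuousOn_iff_continuous_restrict.mp (hholX _ ht₀).continuousOn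
    have hFest : ∀ n : ℕ, ∀ x : E, ‖F n x - L (x : X) v‖ ≤
        8 * M' * ‖v‖ ^ 2 / R ^ 2 * ‖c n‖ := by
      intro n x
      have hk := key x x.2 (c n • v) (hcv n)
      have hLsm : L (x : X) (c n • v) = c n * L (x : X) v := by rw [map_smul, smul_eq_mul]
      have : F n x - L (x : X) v =
          (φ x (t₀ + c n • v) - φ x t₀ - L (x : X) (c n • v)) / c n := by
        rw [hLsm, hFdef]
        field_simp [hc0 n]
      rw [this, norm_div]
      rw [div_le_iff₀ (by simpa using norm_pos_iff.mpr (hc0 n) : 0 < ‖c n‖)]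
      calc ‖φ x (t₀ + c n • v) - φ x t₀ - L (x : X) (c n • v)‖
          ≤ 8 * M' * ‖c n • v‖ ^ 2 / R ^ 2 := hk
        _ = 8 * M' * ‖v‖ ^ 2 / R ^ 2 * ‖c n‖ * ‖c n‖ := by
            rw [norm_smul]
            ring
    have htu : TendstoUniformly F (fun x : E => L (x : X) v) Filter.atTop := by
      rw [Metric.tendstoUniformly_iff]
      intro ε hε
      have hten : Filter.Tendsto (fun n : ℕ => 8 * M' * ‖v‖ ^ 2 / R ^ 2 *
          (R / ((4 * (‖v‖ + 1)) * (n + 1)))) Filter.atTop (nhds 0) := by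
        have h1 : Filter.Tendsto (fun n : ℕ => (1:ℝ) / (n + 1)) Filter.atTop (nhds 0) :=
          tendsto_one_div_add_atTop_nhds_zero_nat
        have h2 := h1.const_mul (8 * M' * ‖v‖ ^ 2 / R ^ 2 * (R / (4 * (‖v‖ + 1))))
        rw [mul_zero] at h2
        convert h2 using 2 with n
        rw [← div_div, mul_one_div, ← mul_div_assoc]
      have := hten.eventually (eventually_lt_nhds hε)
      filter_upwards [this] with n hn x
      rw [dist_comm, dist_eq_norm]
      calc ‖F n x - L (x : X) v‖ ≤ 8 * M' * ‖v‖ ^ 2 / R ^ 2 * ‖c n‖ := hFest n x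
        _ = 8 * M' * ‖v‖ ^ 2 / R ^ 2 * (R / ((4 * (‖v‖ + 1)) * (n + 1))) := by rw [hcn]
        _ < ε := hn
    exact htu.continuous (Filter.Eventually.of_forall hFcont).frequently
  -- the candidate derivative as a continuous linear map
  set Dlin : Y →ₗ[ℂ] BoundedContinuousFunction E ℂ :=
    { toFun := fun v => BoundedContinuousFunction.ofNormedAddCommGroup
        (fun x : E => L (x : X) v) (hLcont v) (10 * M' / R * ‖v‖)
        (fun x => hLb x x.2 v)
      map_add' := by
        intro v w
        ext x
        simp [BoundedContinuousFunction.coe_ofNormedAddCommGroup]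
      map_smul' := by
        intro a v
        ext x
        simp [BoundedContinuousFunction.coe_ofNormedAddCommGroup] } with hDlin
  set D : Y →L[ℂ] BoundedContinuousFunction E ℂ := Dlin.mkContinuous (10 * M' / R)
    (fun v => BoundedContinuousFunction.norm_ofNormedAddCommGroup_le (hLcont v)
      (by positivity) (fun x => hLb x x.2 v)) with hDdef
  have hD : HasFDerivAt Φ D t₀ := by
    rw [hasFDerivAt_iff_isLittleO_nhds_zero, Asymptotics.isLittleO_iff]
    intro ε hε
    have hδ : (0:ℝ) < min (R / 4) (ε * R ^ 2 / (8 * M' + 1)) := by positivity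
    filter_upwards [Metric.closedBall_mem_nhds (0 : Y) hδ] with h hh
    rw [Metric.mem_closedBall, dist_zero_right] at hh
    have hh1 : ‖h‖ ≤ R / 4 := hh.trans (min_le_left _ _)
    have hh2 : ‖h‖ ≤ ε * R ^ 2 / (8 * M' + 1) := hh.trans (min_le_right _ _)
    have hmemT : t₀ + h ∈ T := hRT (by
      rw [Metric.mem_ball, dist_eq_norm, add_sub_cancel_left]
      linarith)
    have hgoal : ‖Φ (t₀ + h) - Φ t₀ - D h‖ ≤ ε * ‖h‖ := by
      apply (BoundedContinuousFunction.norm_le (by positivity)).mpr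
      intro x
      have hval : (Φ (t₀ + h) - Φ t₀ - D h) x =
          φ (x : X) (t₀ + h) - φ (x : X) t₀ - L (x : X) h := by
        simp only [BoundedContinuousFunction.coe_sub, Pi.sub_apply]
        rw [hΦ _ hmemT x, hΦ _ ht₀ x]
        rfl
      rw [hval]
      have hh2' : ‖h‖ * (8 * M' + 1) ≤ ε * R ^ 2 := by
        rw [le_div_iff₀ (by positivity)] at hh2
        linarith
      calc ‖φ (x : X) (t₀ + h) - φ (x : X) t₀ - L (x : X) h‖
          ≤ 8 * M' * ‖h‖ ^ 2 / R ^ 2 := key x x.2 h hh1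
        _ ≤ ε * ‖h‖ := by
            rw [div_le_iff₀ (by positivity)]
            nlinarith [mul_le_mul_of_nonneg_left hh2' (norm_nonneg h), sq_nonneg ‖h‖,
              norm_nonneg h]
    calc ‖Φ (t₀ + h) - Φ t₀ - D h‖ ≤ ε * ‖h‖ := hgoal
      _ = ε * ‖(fun h : Y => h) h‖ := rfl
  exact hD.differentiableAt.differentiableWithinAt
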